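/- Let B ≥ 2 and k ≥ 1 be integers, and for 0 ≤ w < B^k let φ(w) = ⟨a_0, ..., a_{k-1}⟩ be the base-B digits of w. Define R(w) = Σ_{i=0}^{k-1} ( B − 1 − a_i + 2 B^{k-i-1}(a_i + 1) ). Then R(w) = kB − k − (Σ_{i=0}^{k-1} a_i) + 2(Σ_{i=0}^{k-1} B^{k-i-1}) + 2w, and R is strictly increasing: for any 0 ≤ u < v < B^k, R(u) < R(v). -/
import Mathlib


namespace Paper

/-- The `i`-th base-`B` digit (most significant first) of the `k`-digit representation of `w`. -/
def digit (B k w i : ℕ) : ℕ := w / B ^ (k - 1 - i) % B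

/-- `R(w) = Σ_{i<k} (B − 1 − φ(w)_i + 2 B^{k-i-1}(φ(w)_i + 1))`, the distance from `c_w` to
`t` through the layered gadget. -/
def Rfun (B k w : ℕ) : ℤ :=
  ∑ i ∈ Finset.range k,
    ((B : ℤ) - 1 - (digit B k w i : ℤ) + 2 * (B : ℤ) ^ (k - i - 1) * ((digit B k w i : ℤ) + 1))

/-- Digit sum, least significant first. -/
def dsum (B k w : ℕ) : ℕ := ∑ j ∈ Finset.range k, w / B ^ j % B

lemma sum_mod (B k w : ℕ) : ∑ j ∈ Finset.range k, w / B ^ j % B * B ^ j = w % B ^ k := by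
  induction k with
  | zero => simp [Nat.mod_one]
  | succ k ih =>
      rw [Finset.sum_range_succ, ih, Nat.mod_pow_succ]
      ring

lemma weighted_sum (B k w : ℕ) (hw : w < B ^ k) :
    ∑ i ∈ Finset.range k, B ^ (k - i - 1) * digit B k w i = w := by
  have h1 : ∑ i ∈ Finset.range k, B ^ (k - i - 1) * digit B k w i
      = ∑ j ∈ Finset.range k, B ^ j * (w / B ^ j % B) := by
    rw [← Finset.sum_range_reflect (fun j => B ^ j * (w / B ^ j % B)) k]
    refine Finset.sum_congr rfl fun i hi => ?_
    simp only [digit]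
    congr 2
    omega
  have h2 : ∑ j ∈ Finset.range k, B ^ j * (w / B ^ j % B)
      = ∑ j ∈ Finset.range k, w / B ^ j % B * B ^ j :=
    Finset.sum_congr rfl fun j _ => Nat.mul_comm _ _
  rw [h1, h2, sum_mod, Nat.mod_eq_of_lt hw]

lemma dsum_reflect (B k w : ℕ) :
    ∑ i ∈ Finset.range k, digit B k w i = dsum B k w := by
  rw [dsum, ← Finset.sum_range_reflect (fun j => w / B ^ j % B) k]
  rfl

lemma dsum_mono (B : ℕ) (hB : 2 ≤ B) (k : ℕ) : ∀ u v : ℕ, u ≤ v →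
    dsum B k v + u ≤ dsum B k u + v := by
  induction k with
  | zero => intro u v huv; simpa [dsum] using huv
  | succ k ih =>
      intro u v huv
      have hrec : ∀ w : ℕ, dsum B (k + 1) w = w % B + dsum B k (w / B) := by
        intro w
        rw [dsum, Finset.sum_range_succ', dsum]
        simp only [pow_zero, Nat.div_one, pow_succ']
        rw [Nat.add_comm]
        congr 1
        refine Finset.sum_congr rfl fun j hj => ?_
        rw [← Nat.div_div_eq_div_mul]
      rw [hrec u, hrec v]
      have hq : u / B ≤ v / B := Nat.div_le_div_right huv
      have hih := ih (u / B) (v / B) hq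
      have hu := Nat.div_add_mod u B
      have hv := Nat.div_add_mod v B
      have h1 : B * (v / B) = B * (u / B) + B * (v / B - u / B) := by
        rw [← Nat.mul_add]; congr 1; omega
      have h2 : v / B - u / B ≤ B * (v / B - u / B) :=
        Nat.le_mul_of_pos_left _ (by omega)
      omega

lemma Rfun_formula (B k w : ℕ) (hw : w < B ^ k) :
    Rfun B k w = (k : ℤ) * B - k - (∑ i ∈ Finset.range k, (digit B k w i : ℤ))
      + 2 * (∑ i ∈ Finset.range k, (B : ℤ) ^ (k - i - 1)) + 2 * (w : ℤ) := by
  have hws : ((∑ i ∈ Finset.range k, B ^ (k - i - 1) * digit B k w i : ℕ) : ℤ) = (w : ℤ) := by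
    rw [weighted_sum B k w hw]
  push_cast at hws
  rw [Rfun]
  have : ∀ i ∈ Finset.range k,
      ((B : ℤ) - 1 - (digit B k w i : ℤ) + 2 * (B : ℤ) ^ (k - i - 1) * ((digit B k w i : ℤ) + 1))
      = ((B : ℤ) - 1) - (digit B k w i : ℤ) + 2 * (B : ℤ) ^ (k - i - 1)
        + 2 * ((B : ℤ) ^ (k - i - 1) * (digit B k w i : ℤ)) := fun i _ => by ring
  rw [Finset.sum_congr rfl this]
  simp only [Finset.sum_add_distrib, Finset.sum_sub_distrib, Finset.sum_const,
    Finset.card_range, ← Finset.mul_sum, hws]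
  push_cast
  ring

/-- `R(w) = kB − k − Σ_i φ(w)_i + 2 Σ_i B^{k-i-1} + 2w`, and `R` is strictly
increasing on `[0, B^k)`. -/
theorem gadget_target_distance_formula (B k : ℕ) (hB : 2 ≤ B) (hk : 1 ≤ k) :
    (∀ w < B ^ k,
      Rfun B k w = (k : ℤ) * B - k - (∑ i ∈ Finset.range k, (digit B k w i : ℤ))
        + 2 * (∑ i ∈ Finset.range k, (B : ℤ) ^ (k - i - 1)) + 2 * (w : ℤ)) ∧
    (∀ u v : ℕ, u < v → v < B ^ k → Rfun B k u < Rfun B k v) := by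
  constructor
  · exact fun w hw => Rfun_formula B k w hw
  · intro u v huv hv
    have hu : u < B ^ k := lt_trans huv hv
    rw [Rfun_formula B k u hu, Rfun_formula B k v hv]
    have hsum : ∀ w, (∑ i ∈ Finset.range k, (digit B k w i : ℤ)) = (dsum B k w : ℤ) := by
      intro w; rw [← dsum_reflect]; push_cast; rfl
    rw [hsum u, hsum v]
    have hm := dsum_mono B hB k u v (le_of_lt huv)
    have hm' : (dsum B k v : ℤ) + u ≤ (dsum B k u : ℤ) + v := by exact_mod_cast hm
    have huv' : (u : ℤ) < (v : ℤ) := by exact_mod_cast huv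
    linarith

end Paper
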